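/- Let G and H be connected topological groups and let p : G → H be a continuous group homomorphism that is a covering map. Then G is separable if and only if H is separable. -/

import Mathlib

open TopologicalSpace Set Pointwise

theorem isSeparable_source_of_separable {G H : Type*} [TopologicalSpace G] [TopologicalSpace H]
    [SeparableSpace H] (e : OpenPartialHomeomorph G H) : IsSeparable e.source := by
  obtain ⟨D, Dc, Dd⟩ := TopologicalSpace.exists_countable_dense H
  refine ⟨e.symm '' (D ∩ e.target), (Dc.mono inter_subset_left).image _, ?_⟩
  intro x hx
  rw [mem_closure_iff]
  intro U hU hxU
  have hV : IsOpen (e '' (U ∩ e.source)) :=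
    e.isOpen_image_of_subset_source (hU.inter e.open_source) inter_subset_right
  have hne : (e '' (U ∩ e.source)).Nonempty := ⟨e x, x, ⟨hxU, hx⟩, rfl⟩
  obtain ⟨d, hdD, hdV⟩ := Dd.exists_mem_open hV hne
  obtain ⟨g, ⟨hgU, hgs⟩, rfl⟩ := hdV
  exact ⟨g, hgU, ⟨e g, ⟨hdD, e.map_source hgs⟩, e.left_inv hgs⟩⟩

/-- If `p : G → H` is a continuous group homomorphism between connected topological
groups which is a covering map, then `G` is separable iff `H` is separable. -/
theorem separable_iff_of_coveringMap
    {G H : Type*} [TopologicalSpace G] [Group G] [IsTopologicalGroup G] [ConnectedSpace G]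
    [TopologicalSpace H] [Group H] [IsTopologicalGroup H] [ConnectedSpace H]
    (p : G →* H) (hp : Continuous p) (hcov : IsCoveringMap p) :
    TopologicalSpace.SeparableSpace G ↔ TopologicalSpace.SeparableSpace H := by
  constructor
  · intro hG
    -- range of p is clopen and nonempty, hence p is surjective
    have hopen : IsOpen (Set.range p) := hcov.isOpenMap.isOpen_range
    have hcompl : IsOpen (Set.range p)ᶜ := by
      rw [isOpen_iff_mem_nhds]
      intro y hy
      obtain ⟨_, U, hey, hUo, -, e, -⟩ := hcov y
      have hempty : IsEmpty (p ⁻¹' {y} : Set G) := by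
        rw [Set.isEmpty_coe_sort, Set.eq_empty_iff_forall_notMem]
        intro g hg
        exact hy ⟨g, hg⟩
      refine Filter.mem_of_superset (hUo.mem_nhds hey) ?_
      intro z hz hzr
      obtain ⟨g, rfl⟩ := hzr
      have hgs : g ∈ p ⁻¹' U := hz
      exact hempty.elim (e ⟨g, hgs⟩).2
    have hsurj : Function.Surjective p := by
      rw [← Set.range_eq_univ]
      exact IsClopen.eq_univ ⟨isOpen_compl_iff.mp hcompl, hopen⟩ ⟨p 1, Set.mem_range_self 1⟩
    exact hsurj.denseRange.separableSpace hp
  · intro hH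
    obtain ⟨e, he1, hpe⟩ := hcov.isLocalHomeomorph 1
    set V : Set G := e.source ∩ (e.source)⁻¹ with hV
    have hVopen : IsOpen V := e.open_source.inter e.open_source.inv
    have h1V : (1 : G) ∈ V := ⟨he1, by simpa using he1⟩
    have hVsymm : V⁻¹ = V := by
      rw [hV, Set.inter_inv, inv_inv, Set.inter_comm]
    have hVsep : IsSeparable V :=
      (isSeparable_source_of_separable e).mono inter_subset_left
    have hsep : ∀ n : ℕ, IsSeparable (V ^ n) := by
      intro n
      induction n with
      | zero => rw [pow_zero]; exact (Set.finite_one).isSeparable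
      | succ n ih =>
        rw [pow_succ, ← Set.image_mul_prod]
        exact (ih.prod hVsep).image continuous_mul
    have hunion : IsSeparable (⋃ n : ℕ, V ^ n) := IsSeparable.iUnion hsep
    have huniv : (Set.univ : Set G) ⊆ ⋃ n : ℕ, V ^ n := by
      have hSopen : IsOpen ((Subgroup.closure V : Subgroup G) : Set G) :=
        Subgroup.isOpen_of_mem_nhds _
          (Filter.mem_of_superset (hVopen.mem_nhds h1V) Subgroup.subset_closure)
      have hSclosed : IsClosed ((Subgroup.closure V : Subgroup G) : Set G) :=
        Subgroup.isClosed_of_isOpen _ hSopen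
      have hSuniv : ((Subgroup.closure V : Subgroup G) : Set G) = Set.univ :=
        IsClopen.eq_univ ⟨hSclosed, hSopen⟩ ⟨1, Subgroup.one_mem _⟩
      rw [← hSuniv]
      intro x hx
      refine Subgroup.closure_induction ?_ ?_ ?_ ?_ hx
      · intro y hy
        exact Set.mem_iUnion.mpr ⟨1, by simpa [pow_one] using hy⟩
      · exact Set.mem_iUnion.mpr ⟨0, by simp [pow_zero]⟩
      · rintro y z - - hy hz
        obtain ⟨a, ha⟩ := Set.mem_iUnion.mp hy
        obtain ⟨b, hb⟩ := Set.mem_iUnion.mp hz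
        exact Set.mem_iUnion.mpr ⟨a + b, by rw [pow_add]; exact Set.mul_mem_mul ha hb⟩
      · rintro y - hy
        obtain ⟨n, hn⟩ := Set.mem_iUnion.mp hy
        refine Set.mem_iUnion.mpr ⟨n, ?_⟩
        have : (V ^ n)⁻¹ = V ^ n := by rw [← inv_pow, hVsymm]
        rw [← this]
        exact Set.inv_mem_inv.mpr hn
    rw [← isSeparable_univ_iff]
    exact hunion.mono huniv
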